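/- arXiv:1410.0116 — 3 statements merged into one kernel-verified Lean document; each statement's English description precedes it below -/
import Mathlib

section
/- For every n ≥ 2, every A ∈ ℂ^{n×n}, λ ∈ ℂ and nonzero v ∈ ℂ^n with Av = λv and A_{λ,v} invertible, the condition number satisfies μ(A,λ,v) ≥ 1/√2. -/
noncomputable section

open Matrix Set

/-- `T_v`: the orthogonal complement of `v` in `ℂ^n`. -/
def Tv {n : ℕ} (v : EuclideanSpace ℂ (Fin n)) : Submodule ℂ (EuclideanSpace ℂ (Fin n)) :=
  (ℂ ∙ v)ᗮ

/-- The linear map `A_{λ,v} : T_v → T_v`, `x ↦ P_{v⊥}((A - λ·Id) x)`. -/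
def Alv {n : ℕ} (A : Matrix (Fin n) (Fin n) ℂ) (lam : ℂ) (v : EuclideanSpace ℂ (Fin n)) :
    Tv v →ₗ[ℂ] Tv v :=
  ((Tv v).orthogonalProjectionOnto).toLinearMap ∘ₗ
    (Matrix.toEuclideanLin A - lam • LinearMap.id) ∘ₗ (Tv v).subtype

/-- `A_{λ,v}` as a continuous linear map. -/
def AlvC {n : ℕ} (A : Matrix (Fin n) (Fin n) ℂ) (lam : ℂ) (v : EuclideanSpace ℂ (Fin n)) :
    Tv v →L[ℂ] Tv v :=
  LinearMap.toContinuousLinearMap (Alv A lam v)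

/-- Frobenius norm of a complex matrix. -/
def frobNorm {n : ℕ} (A : Matrix (Fin n) (Fin n) ℂ) : ℝ :=
  Real.sqrt (∑ i, ∑ j, ‖A i j‖ ^ 2)

/-- The condition number `μ(A,λ,v) = ‖A‖_F ‖A_{λ,v}^{-1}‖`. -/
def mu {n : ℕ} (A : Matrix (Fin n) (Fin n) ℂ) (lam : ℂ) (v : EuclideanSpace ℂ (Fin n)) : ℝ :=
  frobNorm A * ‖(AlvC A lam v).inverse‖

/-- Fubini-Study (angular) distance. -/
def dP {n : ℕ} (v w : EuclideanSpace ℂ (Fin n)) : ℝ :=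
  Real.arccos (‖(inner ℂ v w : ℂ)‖ / (‖v‖ * ‖w‖))

/-- The distance on triples. -/
def distT {n : ℕ} (A : Matrix (Fin n) (Fin n) ℂ) (lam : ℂ) (v : EuclideanSpace ℂ (Fin n))
    (A' : Matrix (Fin n) (Fin n) ℂ) (lam' : ℂ) (v' : EuclideanSpace ℂ (Fin n)) : ℝ :=
  Real.sqrt ((frobNorm ((frobNorm A)⁻¹ • A - (frobNorm A')⁻¹ • A')) ^ 2 +
    ‖lam / (frobNorm A : ℂ) - lam' / (frobNorm A' : ℂ)‖ ^ 2 + dP v v' ^ 2)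

-- key Bessel estimate
set_option maxHeartbeats 1000000 in
set_option synthInstance.maxHeartbeats 400000 in
lemma key {n : ℕ} (A : Matrix (Fin n) (Fin n) ℂ) (lam : ℂ)
    (v : EuclideanSpace ℂ (Fin n)) (hv : v ≠ 0)
    (heig : Matrix.toEuclideanLin A v = lam • v)
    (x : EuclideanSpace ℂ (Fin n)) (hx : x ∈ Tv v) (hx1 : ‖x‖ = 1) :
    ‖Matrix.toEuclideanLin A x‖ ^ 2 + ‖lam‖ ^ 2 ≤ frobNorm A ^ 2 := by
  set u : EuclideanSpace ℂ (Fin n) := (‖v‖ : ℂ)⁻¹ • v with hu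
  have hvn : (0:ℝ) < ‖v‖ := norm_pos_iff.mpr hv
  have hun : ‖u‖ = 1 := by
    rw [hu, norm_smul]
    simp [hvn.ne']
  have hinner : (inner ℂ v x : ℂ) = 0 := by
    have := hx
    rw [Tv, Submodule.mem_orthogonal] at this
    exact this v (Submodule.mem_span_singleton_self v)
  have h1 : (inner ℂ u x : ℂ) = 0 := by rw [hu, inner_smul_left, hinner, mul_zero]
  have h2 : (inner ℂ x u : ℂ) = 0 := by rw [← inner_conj_symm, h1, map_zero]
  have hON : Orthonormal ℂ (![u, x]) := by
    constructor
    · intro i; fin_cases i <;> simp [hun, hx1]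
    · intro i j hij
      fin_cases i <;> fin_cases j
      · exact absurd rfl hij
      · exact h1
      · exact h2
      · exact absurd rfl hij
  -- rows
  set c : Fin n → EuclideanSpace ℂ (Fin n) :=
    fun i => (WithLp.equiv 2 (Fin n → ℂ)).symm (fun j => star (A i j)) with hc
  have hrow : ∀ (i : Fin n) (y : EuclideanSpace ℂ (Fin n)),
      (inner ℂ (c i) y : ℂ) = Matrix.toEuclideanLin A y i := by
    intro i y
    rw [Matrix.toEuclideanLin_apply]
    simp only [PiLp.inner_apply, hc, RCLike.inner_apply]
    simp [Matrix.mulVec, dotProduct, mul_comm]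
  have hnormsq : ∀ y : EuclideanSpace ℂ (Fin n), ‖y‖ ^ 2 = ∑ i, ‖y i‖ ^ 2 := by
    intro y
    rw [EuclideanSpace.norm_eq]
    rw [Real.sq_sqrt (by positivity)]
  have hAu : Matrix.toEuclideanLin A u = lam • u := by
    rw [hu, LinearMap.map_smul, heig, smul_comm]
  have hAun : ‖Matrix.toEuclideanLin A u‖ = ‖lam‖ := by
    rw [hAu, norm_smul, hun, mul_one]
  have hbessel : ∀ i : Fin n,
      ‖(inner ℂ (c i) u : ℂ)‖ ^ 2 + ‖(inner ℂ (c i) x : ℂ)‖ ^ 2 ≤ ‖c i‖ ^ 2 := by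
    intro i
    have h := hON.sum_inner_products_le (s := Finset.univ) (c i)
    rw [Fin.sum_univ_two] at h
    simp only [Matrix.cons_val_zero, Matrix.cons_val_one, Matrix.head_cons] at h
    calc ‖(inner ℂ (c i) u : ℂ)‖ ^ 2 + ‖(inner ℂ (c i) x : ℂ)‖ ^ 2
        = ‖(inner ℂ u (c i) : ℂ)‖ ^ 2 + ‖(inner ℂ x (c i) : ℂ)‖ ^ 2 := by
          rw [norm_inner_symm (c i) u, norm_inner_symm (c i) x]
      _ ≤ ‖c i‖ ^ 2 := h
  have hsum : ∑ i, (‖(inner ℂ (c i) u : ℂ)‖ ^ 2 + ‖(inner ℂ (c i) x : ℂ)‖ ^ 2)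
      ≤ ∑ i, ‖c i‖ ^ 2 := Finset.sum_le_sum fun i _ => hbessel i
  have hc_norm : ∀ i, ‖c i‖ ^ 2 = ∑ j, ‖A i j‖ ^ 2 := by
    intro i
    rw [hnormsq]
    simp [hc]
  have hfrob : frobNorm A ^ 2 = ∑ i, ∑ j, ‖A i j‖ ^ 2 := by
    rw [frobNorm, Real.sq_sqrt (by positivity)]
  calc ‖Matrix.toEuclideanLin A x‖ ^ 2 + ‖lam‖ ^ 2
      = ∑ i, (‖(inner ℂ (c i) u : ℂ)‖ ^ 2 + ‖(inner ℂ (c i) x : ℂ)‖ ^ 2) := by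
        rw [Finset.sum_add_distrib]
        rw [← hAun, hnormsq, hnormsq]
        simp only [hrow]
        ring
    _ ≤ ∑ i, ‖c i‖ ^ 2 := hsum
    _ = frobNorm A ^ 2 := by rw [hfrob]; exact Finset.sum_congr rfl fun i _ => hc_norm i


section part2
variable {n : ℕ} (A : Matrix (Fin n) (Fin n) ℂ) (lam : ℂ) (v : EuclideanSpace ℂ (Fin n))

set_option maxHeartbeats 1000000 in
set_option synthInstance.maxHeartbeats 400000 in
lemma norm_AlvC_le (hv : v ≠ 0) (heig : Matrix.toEuclideanLin A v = lam • v) :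
    ‖AlvC A lam v‖ ≤ Real.sqrt 2 * frobNorm A := by
  have hfrob0 : 0 ≤ frobNorm A := Real.sqrt_nonneg _
  apply ContinuousLinearMap.opNorm_le_bound _ (by positivity)
  intro x
  rcases eq_or_ne x 0 with rfl | hx0
  · rw [map_zero, norm_zero, mul_zero]
  · have hxn : (0:ℝ) < ‖x‖ := norm_pos_iff.mpr hx0
    set u : EuclideanSpace ℂ (Fin n) := (‖x‖ : ℂ)⁻¹ • (x : EuclideanSpace ℂ (Fin n)) with hu
    have hxE : ‖(x : EuclideanSpace ℂ (Fin n))‖ = ‖x‖ := rfl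
    have hun : ‖u‖ = 1 := by
      rw [hu, norm_smul, norm_inv, hxE]
      rw [Complex.norm_real, Real.norm_of_nonneg hxn.le, inv_mul_cancel₀ hxn.ne']
    have humem : u ∈ Tv v := Submodule.smul_mem _ _ x.2
    have hkey := key A lam v hv heig u humem hun
    have hAu2 : ‖Matrix.toEuclideanLin A u‖ + ‖lam‖ ≤ Real.sqrt 2 * frobNorm A := by
      have hsq : (‖Matrix.toEuclideanLin A u‖ + ‖lam‖) ^ 2 ≤ (Real.sqrt 2 * frobNorm A) ^ 2 := by
        rw [mul_pow, Real.sq_sqrt (by norm_num : (0:ℝ) ≤ 2)]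
        nlinarith [sq_nonneg (‖Matrix.toEuclideanLin A u‖ - ‖lam‖)]
      have := Real.sqrt_le_sqrt hsq
      rwa [Real.sqrt_sq (by positivity), Real.sqrt_sq (by positivity)] at this
    -- express AlvC x
    have hAlv0 : AlvC A lam v x = Alv A lam v x := by
      rw [AlvC, LinearMap.coe_toContinuousLinearMap']
    have hAlv1 : Alv A lam v x = ((Tv v).orthogonalProjectionOnto)
        ((Matrix.toEuclideanLin A - lam • LinearMap.id :
          EuclideanSpace ℂ (Fin n) →ₗ[ℂ] EuclideanSpace ℂ (Fin n))
            (x : EuclideanSpace ℂ (Fin n))) := rfl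
    have hAlv : (AlvC A lam v x : EuclideanSpace ℂ (Fin n)) =
        ((Tv v).orthogonalProjectionOnto (Matrix.toEuclideanLin A x) : EuclideanSpace ℂ (Fin n))
          - lam • (x : EuclideanSpace ℂ (Fin n)) := by
      rw [hAlv0, hAlv1, LinearMap.sub_apply, LinearMap.smul_apply, LinearMap.id_apply, map_sub,
        _root_.map_smul, Submodule.orthogonalProjectionOnto_mem_subspace_eq_self]
      rfl
    have hP : ∀ y : EuclideanSpace ℂ (Fin n),
        ‖((Tv v).orthogonalProjectionOnto y : EuclideanSpace ℂ (Fin n))‖ ≤ ‖y‖ := by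
      intro y
      have := ((Tv v).orthogonalProjectionOnto).le_opNorm y
      calc ‖((Tv v).orthogonalProjectionOnto y : EuclideanSpace ℂ (Fin n))‖
          = ‖(Tv v).orthogonalProjectionOnto y‖ := rfl
        _ ≤ ‖(Tv v).orthogonalProjectionOnto‖ * ‖y‖ := this
        _ ≤ 1 * ‖y‖ := by
            exact mul_le_mul_of_nonneg_right (Submodule.orthogonalProjectionOnto_norm_le _) (norm_nonneg _)
        _ = ‖y‖ := one_mul _
    have hxu : (x : EuclideanSpace ℂ (Fin n)) = (‖x‖ : ℂ) • u := by
      rw [hu, smul_smul]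
      rw [mul_inv_cancel₀ (by exact_mod_cast hxn.ne')]
      rw [one_smul]
    calc ‖AlvC A lam v x‖
        = ‖(AlvC A lam v x : EuclideanSpace ℂ (Fin n))‖ := rfl
      _ ≤ ‖((Tv v).orthogonalProjectionOnto (Matrix.toEuclideanLin A x) :
            EuclideanSpace ℂ (Fin n))‖ + ‖lam • (x : EuclideanSpace ℂ (Fin n))‖ := by
          rw [hAlv]; exact norm_sub_le _ _
      _ ≤ ‖Matrix.toEuclideanLin A (x : EuclideanSpace ℂ (Fin n))‖ + ‖lam‖ * ‖x‖ := by
          rw [norm_smul, hxE]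
          exact add_le_add_left (hP _) _
      _ = ‖x‖ * ‖Matrix.toEuclideanLin A u‖ + ‖lam‖ * ‖x‖ := by
          rw [hxu, LinearMap.map_smul, norm_smul]
          simp
      _ = (‖Matrix.toEuclideanLin A u‖ + ‖lam‖) * ‖x‖ := by ring
      _ ≤ Real.sqrt 2 * frobNorm A * ‖x‖ :=
          mul_le_mul_of_nonneg_right hAu2 (norm_nonneg _)

end part2

set_option maxHeartbeats 1000000 in
set_option synthInstance.maxHeartbeats 400000 in
/-- Lemma 3.8: for every well-posed eigentriple, `μ(A,λ,v) ≥ 1/√2`. -/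
theorem mu_lower_bound {n : ℕ} (hn : 2 ≤ n) (A : Matrix (Fin n) (Fin n) ℂ) (lam : ℂ)
    (v : EuclideanSpace ℂ (Fin n)) (hv : v ≠ 0)
    (heig : Matrix.toEuclideanLin A v = lam • v)
    (hinv : Function.Bijective (Alv A lam v)) :
    1 / Real.sqrt 2 ≤ mu A lam v := by
  have hfin : 0 < Module.finrank ℂ (Tv v) := by
    have h1 : Module.finrank ℂ (ℂ ∙ v) + Module.finrank ℂ (Tv v)
        = Module.finrank ℂ (EuclideanSpace ℂ (Fin n)) :=
      Submodule.finrank_add_finrank_orthogonal (ℂ ∙ v)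
    rw [finrank_span_singleton hv, finrank_euclideanSpace_fin] at h1
    omega
  haveI : Nontrivial (Tv v) := Module.finrank_pos_iff.mp hfin
  set e := LinearEquiv.ofBijective (Alv A lam v) hinv with he
  set eC := e.toContinuousLinearEquiv with heC
  have hcoe : (eC : Tv v →L[ℂ] Tv v) = AlvC A lam v := by
    ext x; rfl
  have hinv_eq : (AlvC A lam v).inverse = (eC.symm : Tv v →L[ℂ] Tv v) := by
    rw [← hcoe, ContinuousLinearMap.inverse_equiv]
  have hone : (1:ℝ) ≤ ‖(eC.symm : Tv v →L[ℂ] Tv v)‖ * ‖AlvC A lam v‖ := by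
    have hid : (eC.symm : Tv v →L[ℂ] Tv v).comp (AlvC A lam v)
        = ContinuousLinearMap.id ℂ (Tv v) := by
      rw [← hcoe]; exact eC.coe_symm_comp_coe
    calc (1:ℝ) = ‖ContinuousLinearMap.id ℂ (Tv v)‖ := (ContinuousLinearMap.norm_id).symm
      _ = ‖(eC.symm : Tv v →L[ℂ] Tv v).comp (AlvC A lam v)‖ := by rw [hid]
      _ ≤ _ := ContinuousLinearMap.opNorm_comp_le _ _
  have hbound := norm_AlvC_le A lam v hv heig
  have h2 : (1:ℝ) ≤ ‖(eC.symm : Tv v →L[ℂ] Tv v)‖ * (Real.sqrt 2 * frobNorm A) :=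
    hone.trans (mul_le_mul_of_nonneg_left hbound (ContinuousLinearMap.opNorm_nonneg _))
  have hs2 : (0:ℝ) < Real.sqrt 2 := by positivity
  rw [div_le_iff₀ hs2, mu, hinv_eq]
  nlinarith [ContinuousLinearMap.opNorm_nonneg (eC.symm : Tv v →L[ℂ] Tv v), Real.sqrt_nonneg (2:ℝ)]

end
end

section
/- Let λ be a simple eigenvalue of A ∈ ℂ^{n×n} (a root of multiplicity one of the characteristic polynomial), let v ∈ ℂ^n be nonzero with Av = λv, and let u ∈ ℂ^n be nonzero with A*u = conj(λ)·u. Then ⟨v,u⟩ ≠ 0. -/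
noncomputable section

open Matrix Set

open Polynomial in
lemma eval_charpoly' {n : ℕ} (M : Matrix (Fin n) (Fin n) ℂ) (x : ℂ) :
    (M.charpoly).eval x = (x • (1 : Matrix (Fin n) (Fin n) ℂ) - M).det := by
  rw [Matrix.charpoly, ← Polynomial.coe_evalRingHom, RingHom.map_det]
  congr 1
  ext i j
  simp [Matrix.charmatrix_apply, Matrix.one_apply, Matrix.scalar_apply, Matrix.diagonal,
    Matrix.sub_apply, smul_eq_mul, Matrix.smul_apply, Matrix.of_apply]
  split <;> simp

open Polynomial in
lemma charpoly_shift {n : ℕ} (A : Matrix (Fin n) (Fin n) ℂ) (lam : ℂ) :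
    (A - lam • 1).charpoly = A.charpoly.comp (X + C lam) := by
  apply Polynomial.funext
  intro x
  rw [eval_charpoly', Polynomial.eval_comp]
  simp only [eval_add, eval_X, eval_C]
  rw [eval_charpoly']
  congr 1
  rw [add_smul]
  abel

/-- Lemma: for a simple eigenvalue, left and right eigenvectors are not orthogonal. -/
theorem left_right_eigenvector_not_orthogonal {n : ℕ} (A : Matrix (Fin n) (Fin n) ℂ)
    (lam : ℂ) (hsimple : (Matrix.charpoly A).rootMultiplicity lam = 1)
    (v u : EuclideanSpace ℂ (Fin n)) (hv : v ≠ 0) (hu : u ≠ 0)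
    (heig : Matrix.toEuclideanLin A v = lam • v)
    (hleft : Matrix.toEuclideanLin Aᴴ u = (starRingEnd ℂ) lam • u) :
    (inner ℂ v u : ℂ) ≠ 0 := by
  intro h
  set g : Module.End ℂ (EuclideanSpace ℂ (Fin n)) :=
    Matrix.toEuclideanLin (A - lam • 1) with hg
  -- charpoly of g
  have hone : Matrix.toEuclideanLin (1 : Matrix (Fin n) (Fin n) ℂ) = LinearMap.id := by
    ext x
    simp [Matrix.toEuclideanLin_apply]
  have hgv : g v = 0 := by
    rw [hg, map_sub, _root_.map_smul, hone]
    simp [heig]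
  have hchar : g.charpoly = (A - lam • 1).charpoly := by
    rw [hg, Matrix.toEuclideanLin_eq_toLin]
    rw [← LinearMap.charpoly_toMatrix _ (PiLp.basisFun 2 ℂ (Fin n)),
      LinearMap.toMatrix_toLin]
  -- dimension of max generalized eigenspace = 1
  have hdim : Module.finrank ℂ (g.maxGenEigenspace 0) = 1 := by
    rw [LinearMap.finrank_maxGenEigenspace_zero_eq, hchar, charpoly_shift,
      ← Polynomial.rootMultiplicity_eq_natTrailingDegree', 
      ← Polynomial.rootMultiplicity_eq_rootMultiplicity, hsimple]
  have hvV : v ∈ g.maxGenEigenspace 0 := by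
    rw [Module.End.mem_maxGenEigenspace]
    exact ⟨1, by simpa using hgv⟩
  have hspan : (ℂ ∙ v) = g.maxGenEigenspace 0 := by
    apply Submodule.eq_of_le_of_finrank_le (Submodule.span_le.mpr (by simp [hvV]))
    rw [hdim, finrank_span_singleton hv]
  have hadj : LinearMap.adjoint g u = 0 := by
    have hconj : (A - lam • 1)ᴴ = Aᴴ - (starRingEnd ℂ) lam • 1 := by
      simp
    rw [hg, ← Matrix.toEuclideanLin_conjTranspose_eq_adjoint, hconj, map_sub,
      _root_.map_smul, hone]
    simp [hleft]
  have hVperp : ∀ x ∈ g.maxGenEigenspace 0, (inner ℂ x u : ℂ) = 0 := by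
    intro x hx
    rw [← hspan] at hx
    obtain ⟨c, rfl⟩ := Submodule.mem_span_singleton.mp hx
    rw [inner_smul_left, h, mul_zero]
  have hWperp : ∀ x ∈ (⨅ k : ℕ, LinearMap.range (g^k)), (inner ℂ x u : ℂ) = 0 := by
    intro x hx
    have hx1 : x ∈ LinearMap.range (g^1) := (Submodule.mem_iInf _).mp hx 1
    obtain ⟨y, rfl⟩ := hx1
    rw [pow_one, ← LinearMap.adjoint_inner_right, hadj, inner_zero_right]
  have hcompl := LinearMap.isCompl_iSup_ker_pow_iInf_range_pow g
  have hsup : g.maxGenEigenspace 0 = ⨆ k : ℕ, LinearMap.ker (g^k) := by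
    simp [← Module.End.iSup_genEigenspace_eq, Module.End.genEigenspace_nat]
  have htop : (g.maxGenEigenspace 0) ⊔ (⨅ k : ℕ, LinearMap.range (g^k)) = ⊤ := by
    rw [hsup]
    exact hcompl.sup_eq_top
  have humem : u ∈ (g.maxGenEigenspace 0) ⊔ (⨅ k : ℕ, LinearMap.range (g^k)) := by
    rw [htop]; trivial
  obtain ⟨a, ha, b, hb, hab⟩ := Submodule.mem_sup.mp humem
  have hz : (inner ℂ u u : ℂ) = 0 := by
    nth_rewrite 1 [← hab]
    rw [inner_add_left, hVperp a ha, hWperp b hb, add_zero]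
  exact hu (inner_self_eq_zero.mp hz)

end
end

section
/- Let E and F be finite-dimensional real inner product spaces with dim E ≥ dim F, and let φ : E → F be a surjective linear map. For a surjective linear map ψ between real inner product spaces define its normal determinant ndet(ψ) := |det(ψ̃)|, where ψ̃ is the restriction of ψ to the orthogonal complement of ker ψ (equivalently, ndet(ψ) = √(det(ψ ψ*))). Let Γ := {(x, φ(x)) : x ∈ E} ⊆ E × F, with the inner product induced from the orthogonal direct sum E × F, and let p₁ : Γ → E, (x,φ(x)) ↦ x, and p₂ : Γ → F, (x,φ(x)) ↦ φ(x), be the projections. Then ndet(p₁)/ndet(p₂) = (ndet(φ))^{-1}. -/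
noncomputable section

open FiniteDimensional

variable {E F : Type*}
  [NormedAddCommGroup E] [InnerProductSpace ℝ E] [FiniteDimensional ℝ E]
  [NormedAddCommGroup F] [InnerProductSpace ℝ F] [FiniteDimensional ℝ F]

/-- The normal determinant of a linear map between real inner product spaces:
`ndet ψ = √(det (ψ ∘ ψ*))`, which equals `|det ψ̃|` for `ψ̃` the restriction of a
surjective `ψ` to the orthogonal complement of its kernel. -/
def ndet (ψ : E →ₗ[ℝ] F) : ℝ :=
  Real.sqrt (LinearMap.det (ψ ∘ₗ LinearMap.adjoint ψ))

/-- The graph `Γ = {(x, φ x)}` of `φ`, as a submodule of the orthogonal direct sum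
`E ×₂ F` (i.e. `WithLp 2 (E × F)`). -/
def graphL2 (φ : E →ₗ[ℝ] F) : Submodule ℝ (WithLp 2 (E × F)) :=
  (LinearMap.graph φ).comap (WithLp.linearEquiv 2 ℝ (E × F)).toLinearMap

/-- The first projection `Γ → E`. -/
def graphProj₁ (φ : E →ₗ[ℝ] F) : graphL2 φ →ₗ[ℝ] E :=
  (LinearMap.fst ℝ E F) ∘ₗ (WithLp.linearEquiv 2 ℝ (E × F)).toLinearMap ∘ₗ
    (graphL2 φ).subtype

/-- The second projection `Γ → F`. -/
def graphProj₂ (φ : E →ₗ[ℝ] F) : graphL2 φ →ₗ[ℝ] F :=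
  (LinearMap.snd ℝ E F) ∘ₗ (WithLp.linearEquiv 2 ℝ (E × F)).toLinearMap ∘ₗ
    (graphL2 φ).subtype

open RealInnerProductSpace in
private lemma posSemidef_det_nonneg {n : Type*} [Fintype n] [DecidableEq n]
    {A : Matrix n n ℝ} (hA : A.PosSemidef) : 0 ≤ A.det := by
  rw [hA.isHermitian.det_eq_prod_eigenvalues]
  exact Finset.prod_nonneg fun i _ => by simpa using hA.eigenvalues_nonneg i

open Matrix RealInnerProductSpace in
/-- Lemma: `ndet p₁ / ndet p₂ = (ndet φ)⁻¹` for a surjective linear map `φ : E → F`. -/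
theorem ndet_graph_projections (φ : E →ₗ[ℝ] F) (hφ : Function.Surjective φ)
    (hdim : Module.finrank ℝ F ≤ Module.finrank ℝ E) :
    ndet (graphProj₁ φ) / ndet (graphProj₂ φ) = (ndet φ)⁻¹ := by
  classical
  set A := LinearMap.adjoint φ with hAdef
  set T : E →ₗ[ℝ] E := LinearMap.id + A ∘ₗ φ with hTdef
  set S : F →ₗ[ℝ] F := LinearMap.id + φ ∘ₗ A with hSdef
  -- matrices with respect to orthonormal bases
  set bE := stdOrthonormalBasis ℝ E with hbE
  set bF := stdOrthonormalBasis ℝ F with hbF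
  set M := LinearMap.toMatrix bE.toBasis bF.toBasis φ with hM
  have hMadj : LinearMap.toMatrix bF.toBasis bE.toBasis A = Mᴴ :=
    LinearMap.toMatrix_adjoint bE bF φ
  have hSM : LinearMap.toMatrix bF.toBasis bF.toBasis S = 1 + M * Mᴴ := by
    rw [hSdef, map_add, LinearMap.toMatrix_id,
      LinearMap.toMatrix_comp bF.toBasis bE.toBasis bF.toBasis, hMadj, hM]
  have hTM : LinearMap.toMatrix bE.toBasis bE.toBasis T = 1 + Mᴴ * M := by
    rw [hTdef, map_add, LinearMap.toMatrix_id,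
      LinearMap.toMatrix_comp bE.toBasis bF.toBasis bE.toBasis, hMadj, hM]
  set s := (1 + M * Mᴴ).det with hs
  set d := (M * Mᴴ).det with hd
  have hdetS : LinearMap.det S = s := by
    rw [← LinearMap.det_toMatrix bF.toBasis, hSM]
  have hdetT : LinearMap.det T = s := by
    rw [← LinearMap.det_toMatrix bE.toBasis, hTM, hs, ← Matrix.det_one_add_mul_comm Mᴴ M]
  have hspos : (0:ℝ) < s :=
    (Matrix.PosDef.one.add_posSemidef (Matrix.posSemidef_self_mul_conjTranspose M)).det_pos
  have hdetphiA : LinearMap.det (φ ∘ₗ A) = d := by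
    rw [← LinearMap.det_toMatrix bF.toBasis,
      LinearMap.toMatrix_comp bF.toBasis bE.toBasis bF.toBasis, hMadj, hM]
  have hdnn : (0:ℝ) ≤ d := posSemidef_det_nonneg (Matrix.posSemidef_self_mul_conjTranspose M)
  have htne : LinearMap.det T ≠ 0 := by rw [hdetT]; exact hspos.ne'
  set Teq := LinearMap.equivOfDetNeZero T htne with hTeqdef
  have hTeq : (Teq : E →ₗ[ℝ] E) = T := LinearEquiv.coe_ofIsUnitDet _
  -- the graph parametrization
  set γ₀ : E →ₗ[ℝ] WithLp 2 (E × F) :=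
    (WithLp.linearEquiv 2 ℝ (E × F)).symm.toLinearMap ∘ₗ (LinearMap.id.prod φ) with hγ₀
  have hγmem : ∀ x, γ₀ x ∈ graphL2 φ := by
    intro x
    simp [graphL2, hγ₀, LinearMap.mem_graph_iff]
  set γmap : E →ₗ[ℝ] graphL2 φ := γ₀.codRestrict _ hγmem with hγmap
  have hTsymm : ∀ z, T (Teq.symm z) = z := by
    intro z
    conv_lhs => rw [← hTeq]
    exact Teq.apply_symm_apply z
  -- key inner product identity
  have hsnd : ∀ y : graphL2 φ, (WithLp.ofLp (y : WithLp 2 (E × F))).2 =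
      φ (WithLp.ofLp (y : WithLp 2 (E × F))).1 := by
    intro y
    exact y.2
  have hkey : ∀ (e : E) (y : graphL2 φ),
      ⟪γmap e, y⟫ = ⟪T e, graphProj₁ φ y⟫ := by
    intro e y
    rw [Submodule.coe_inner]
    rw [WithLp.prod_inner_apply]
    have h2 := hsnd y
    have hfst : (WithLp.ofLp (γmap e : WithLp 2 (E × F))).1 = e := rfl
    have hsnd' : (WithLp.ofLp (γmap e : WithLp 2 (E × F))).2 = φ e := rfl
    have hp1 : graphProj₁ φ y = (WithLp.ofLp (y : WithLp 2 (E × F))).1 := rfl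
    calc ⟪(WithLp.ofLp (γmap e : WithLp 2 (E × F))).1, (WithLp.ofLp (y : WithLp 2 (E × F))).1⟫
          + ⟪(WithLp.ofLp (γmap e : WithLp 2 (E × F))).2, (WithLp.ofLp (y : WithLp 2 (E × F))).2⟫
        = ⟪e, graphProj₁ φ y⟫ + ⟪φ e, φ (graphProj₁ φ y)⟫ := by
          rw [hp1]; exact congrArg₂ (· + ·) rfl (by rw [show (WithLp.ofLp (γmap e : WithLp 2 (E × F))).2 = φ e from rfl, show (WithLp.ofLp (y : WithLp 2 (E × F))).2 = φ ((WithLp.ofLp (y : WithLp 2 (E × F))).1) from h2])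
      _ = ⟪e, graphProj₁ φ y⟫ + ⟪A (φ e), graphProj₁ φ y⟫ := by
          rw [LinearMap.adjoint_inner_left]
      _ = ⟪T e, graphProj₁ φ y⟫ := by
          rw [hTdef]; simp [inner_add_left]
  -- adjoint of p₁
  have adj1 : γmap ∘ₗ (Teq.symm : E →ₗ[ℝ] E) = LinearMap.adjoint (graphProj₁ φ) := by
    rw [LinearMap.eq_adjoint_iff]
    intro x y
    have := hkey (Teq.symm x) y
    simpa [← hTeq, LinearEquiv.apply_symm_apply] using this
  -- adjoint of p₂
  have adj2 : γmap ∘ₗ (Teq.symm : E →ₗ[ℝ] E) ∘ₗ A = LinearMap.adjoint (graphProj₂ φ) := by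
    rw [LinearMap.eq_adjoint_iff]
    intro x y
    have h1 := hkey (Teq.symm (A x)) y
    have hp2 : graphProj₂ φ y = φ (graphProj₁ φ y) := hsnd y
    simp only [LinearMap.comp_apply, LinearEquiv.coe_coe]
    rw [h1, hTsymm (A x), hp2, hAdef, LinearMap.adjoint_inner_left]
  -- determinant of p₁ ∘ p₁*
  have comp1 : graphProj₁ φ ∘ₗ γmap = LinearMap.id := by
    ext x; rfl
  have hdet1 : LinearMap.det (graphProj₁ φ ∘ₗ LinearMap.adjoint (graphProj₁ φ)) = s⁻¹ := by
    have hXeq : graphProj₁ φ ∘ₗ LinearMap.adjoint (graphProj₁ φ) = (Teq.symm : E →ₗ[ℝ] E) := by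
      rw [← adj1]; ext z; rfl
    have hcomp : (Teq.symm : E →ₗ[ℝ] E) ∘ₗ T = LinearMap.id := by
      ext z
      simp only [LinearMap.comp_apply, LinearEquiv.coe_coe, LinearMap.id_apply]
      conv_lhs => rw [← hTeq]
      exact Teq.symm_apply_apply z
    have hdc := LinearMap.det_comp (Teq.symm : E →ₗ[ℝ] E) T
    rw [hcomp, LinearMap.det_id, hdetT] at hdc
    rw [hXeq]
    exact eq_inv_of_mul_eq_one_left hdc.symm
  -- determinant of p₂ ∘ p₂*
  have comp2 : graphProj₂ φ ∘ₗ γmap = φ := by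
    ext x; rfl
  have hST : S ∘ₗ φ = φ ∘ₗ T := by
    rw [hSdef, hTdef]; ext x; simp
  have hdet2 : LinearMap.det (graphProj₂ φ ∘ₗ LinearMap.adjoint (graphProj₂ φ)) = s⁻¹ * d := by
    have hXeq : graphProj₂ φ ∘ₗ LinearMap.adjoint (graphProj₂ φ)
        = (φ ∘ₗ (Teq.symm : E →ₗ[ℝ] E)) ∘ₗ A := by
      rw [← adj2]; ext z; rfl
    have hScomp : S ∘ₗ ((φ ∘ₗ (Teq.symm : E →ₗ[ℝ] E)) ∘ₗ A) = φ ∘ₗ A := by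
      ext z
      have h3 := LinearMap.ext_iff.mp hST (Teq.symm (A z))
      simp only [LinearMap.comp_apply, LinearEquiv.coe_coe] at h3 ⊢
      rw [h3, hTsymm (A z)]
    have hdc := LinearMap.det_comp S ((φ ∘ₗ (Teq.symm : E →ₗ[ℝ] E)) ∘ₗ A)
    rw [hScomp, hdetphiA, hdetS] at hdc
    rw [hXeq, hdc, ← mul_assoc, inv_mul_cancel₀ hspos.ne', one_mul]
  -- conclude
  have h1 : Real.sqrt s⁻¹ ≠ 0 := (Real.sqrt_pos.mpr (inv_pos.mpr hspos)).ne'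
  rw [ndet, ndet, ndet, hdet1, hdet2, hdetphiA,
    Real.sqrt_mul (le_of_lt (inv_pos.mpr hspos)),
    div_mul_eq_div_div, div_self h1, one_div]

end
end
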